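/- Binomial entropy concavity: for each fixed natural number n, the Shannon entropy of the binomial distribution, S_n(T) = −Σ_{m=0}^{n} C(n,m)T^m(1−T)^{n−m}·log( C(n,m)T^m(1−T)^{n−m} ), is symmetric about T = 1/2 (S_n(T) = S_n(1−T)) and concave in T on (0,1), hence maximized at T = 1/2. -/

import Mathlib

open Set Finset

noncomputable def cc (n m : ℕ) : ℝ := Real.log (n.choose m : ℝ)

lemma concaveOn_congr_of_eq {s : Set ℝ} {f g : ℝ → ℝ} (hg : ConcaveOn ℝ s g)
    (h : ∀ x ∈ s, f x = g x) : ConcaveOn ℝ s f := by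
  refine ⟨hg.1, fun x hx y hy a b ha hb hab => ?_⟩
  rw [h x hx, h y hy, h _ (hg.1 hx hy ha hb hab)]
  exact hg.2 hx hy ha hb hab



lemma binom_sum_one (N : ℕ) (t : ℝ) :
    ∑ m ∈ Finset.range (N+1), (N.choose m : ℝ) * t^m * (1-t)^(N-m) = 1 := by
  have h := add_pow t (1-t) N
  have h1 : t + (1-t) = 1 := by ring
  rw [h1, one_pow] at h
  calc ∑ m ∈ Finset.range (N+1), (N.choose m : ℝ) * t^m * (1-t)^(N-m)
      = ∑ m ∈ Finset.range (N+1), t^m * (1-t)^(N-m) * (N.choose m : ℝ) :=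
        Finset.sum_congr rfl fun m _ => by ring
    _ = 1 := h.symm

lemma binom_mean (N : ℕ) (t : ℝ) :
    ∑ m ∈ Finset.range (N+2), (m:ℝ) * ((N+1).choose m : ℝ) * t^m * (1-t)^(N+1-m)
      = ((N:ℝ)+1) * t := by
  rw [Finset.sum_range_succ']
  simp only [Nat.cast_zero, zero_mul, add_zero]
  have key : ∀ k ∈ Finset.range (N+1),
      (((k:ℕ)+1 : ℕ) : ℝ) * ((N+1).choose (k+1) : ℝ) * t^(k+1) * (1-t)^(N+1-(k+1))
        = ((N:ℝ)+1) * t * ((N.choose k : ℝ) * t^k * (1-t)^(N-k)) := by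
    intro k hk
    have hcast : ((N:ℝ)+1) * (N.choose k : ℝ) = ((N+1).choose (k+1) : ℝ) * ((k:ℝ)+1) := by
      exact_mod_cast congrArg (Nat.cast (R := ℝ)) (Nat.add_one_mul_choose_eq N k)
    have he : N+1-(k+1) = N-k := by omega
    rw [he, pow_succ]
    push_cast
    linear_combination (-(t^k * t * (1-t)^(N-k))) * hcast
  rw [Finset.sum_congr rfl key, ← Finset.mul_sum, binom_sum_one, mul_one]

lemma binom_mean' (N : ℕ) (t : ℝ) :
    ∑ m ∈ Finset.range (N+2), ((N+1-m : ℕ):ℝ) * ((N+1).choose m : ℝ) * t^m * (1-t)^(N+1-m)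
      = ((N:ℝ)+1) * (1-t) := by
  rw [Finset.sum_range_succ]
  simp only [Nat.sub_self, Nat.cast_zero, zero_mul]
  have key : ∀ m ∈ Finset.range (N+1),
      ((N+1-m : ℕ):ℝ) * ((N+1).choose m : ℝ) * t^m * (1-t)^(N+1-m)
        = ((N:ℝ)+1) * (1-t) * ((N.choose m : ℝ) * t^m * (1-t)^(N-m)) := by
    intro m hm
    have hm' : m ≤ N := by have := Finset.mem_range.mp hm; omega
    have hcast : (N.choose m : ℝ) * ((N:ℝ)+1) = ((N+1).choose m : ℝ) * ((N+1-m : ℕ):ℝ) := by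
      exact_mod_cast congrArg (Nat.cast (R := ℝ)) (Nat.choose_mul_succ_eq N m)
    have he : N+1-m = (N-m)+1 := by omega
    rw [he, pow_succ]
    have hc2 : ((N-m+1 : ℕ):ℝ) = ((N-m:ℕ):ℝ) + 1 := by push_cast; ring
    rw [hc2]
    rw [he, hc2] at hcast
    linear_combination (-(t^m * (1-t)^(N-m) * (1-t))) * hcast
  rw [Finset.sum_congr rfl key, ← Finset.mul_sum, binom_sum_one, mul_one, add_zero]



lemma hasDerivAt_binsum (N : ℕ) (d : ℕ → ℝ) (T : ℝ) :
    HasDerivAt (fun t => ∑ m ∈ Finset.range (N+2),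
        d m * ((N+1).choose m : ℝ) * t^m * (1-t)^(N+1-m))
      (((N:ℝ)+1) * ∑ k ∈ Finset.range (N+1),
        (d (k+1) - d k) * (N.choose k : ℝ) * T^k * (1-T)^(N-k)) T := by
  have hterm : ∀ m ∈ Finset.range (N+2),
      HasDerivAt (fun t : ℝ => d m * ((N+1).choose m : ℝ) * t^m * (1-t)^(N+1-m))
        (d m * ((N+1).choose m : ℝ) * ((m:ℝ) * T^(m-1) * (1-T)^(N+1-m))
          - d m * ((N+1).choose m : ℝ) * (((N+1-m:ℕ):ℝ) * T^m * (1-T)^(N-m))) T := by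
    intro m hm
    have hc : HasDerivAt (fun t:ℝ => 1 - t) (-1) T := (hasDerivAt_id T).const_sub 1
    have h2 : HasDerivAt (fun t:ℝ => (1-t)^(N+1-m)) (-(((N+1-m:ℕ):ℝ) * (1-T)^(N-m))) T := by
      have h := (hasDerivAt_pow (N+1-m) (1-T)).comp T hc
      have he : N+1-m-1 = N-m := by omega
      rw [he] at h
      refine h.congr_deriv ?_
      ring
    have h1 : HasDerivAt (fun t:ℝ => t^m) ((m:ℝ) * T^(m-1)) T := hasDerivAt_pow m T
    have h3 := (h1.mul h2).const_mul (d m * ((N+1).choose m : ℝ))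
    simp only [mul_assoc] at h3 ⊢
    refine h3.congr_deriv ?_
    ring
  have hsum := HasDerivAt.fun_sum hterm
  rw [Finset.sum_sub_distrib] at hsum
  have hA : ∑ m ∈ Finset.range (N+2),
      d m * ((N+1).choose m : ℝ) * ((m:ℝ) * T^(m-1) * (1-T)^(N+1-m))
      = ∑ k ∈ Finset.range (N+1),
        d (k+1) * (((N:ℝ)+1) * (N.choose k : ℝ)) * (T^k * (1-T)^(N-k)) := by
    rw [Finset.sum_range_succ']
    simp only [Nat.cast_zero, zero_mul, mul_zero, add_zero]
    apply Finset.sum_congr rfl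
    intro k hk
    have hcast : ((N:ℝ)+1) * (N.choose k : ℝ) = ((N+1).choose (k+1) : ℝ) * ((k:ℝ)+1) := by
      exact_mod_cast congrArg (Nat.cast (R := ℝ)) (Nat.add_one_mul_choose_eq N k)
    have he : N+1-(k+1) = N-k := by omega
    have he2 : k+1-1 = k := by omega
    rw [he, he2]
    push_cast
    linear_combination (-(d (k+1) * T^k * (1-T)^(N-k))) * hcast
  have hB : ∑ m ∈ Finset.range (N+2),
      d m * ((N+1).choose m : ℝ) * (((N+1-m:ℕ):ℝ) * T^m * (1-T)^(N-m))
      = ∑ k ∈ Finset.range (N+1),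
        d k * (((N:ℝ)+1) * (N.choose k : ℝ)) * (T^k * (1-T)^(N-k)) := by
    rw [Finset.sum_range_succ]
    simp only [Nat.sub_self, Nat.cast_zero, zero_mul, mul_zero, add_zero]
    apply Finset.sum_congr rfl
    intro k hk
    have hk' : k ≤ N := by have := Finset.mem_range.mp hk; omega
    have hcast : (N.choose k : ℝ) * ((N:ℝ)+1) = ((N+1).choose k : ℝ) * ((N+1-k : ℕ):ℝ) := by
      exact_mod_cast congrArg (Nat.cast (R := ℝ)) (Nat.choose_mul_succ_eq N k)
    linear_combination (-(d k * T^k * (1-T)^(N-k))) * hcast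
  rw [hA, hB] at hsum
  refine hsum.congr_deriv ?_
  rw [Finset.mul_sum, ← Finset.sum_sub_distrib]
  exact Finset.sum_congr rfl fun k _ => by ring



lemma S_eq (M : ℕ) {T : ℝ} (hT0 : 0 < T) (hT1 : T < 1) :
    -∑ m ∈ Finset.range (M+2+1),
        (((M+2).choose m : ℝ) * T^m * (1-T)^(M+2-m)) *
          Real.log (((M+2).choose m : ℝ) * T^m * (1-T)^(M+2-m))
      = ((M:ℝ)+2) * (Real.negMulLog T + Real.negMulLog (1-T))
        - ∑ m ∈ Finset.range (M+3),
            cc (M+2) m * ((M+2).choose m : ℝ) * T^m * (1-T)^(M+2-m) := by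
  have h1T : (0:ℝ) < 1 - T := by linarith
  have hlog : ∀ m ∈ Finset.range (M+3),
      (((M+2).choose m : ℝ) * T^m * (1-T)^(M+2-m)) *
          Real.log (((M+2).choose m : ℝ) * T^m * (1-T)^(M+2-m))
        = cc (M+2) m * ((M+2).choose m : ℝ) * T^m * (1-T)^(M+2-m)
          + Real.log T * ((m:ℝ) * ((M+2).choose m : ℝ) * T^m * (1-T)^(M+2-m))
          + Real.log (1-T) * (((M+2-m:ℕ):ℝ) * ((M+2).choose m : ℝ) * T^m * (1-T)^(M+2-m)) := by
    intro m hm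
    have hC : (0:ℝ) < ((M+2).choose m : ℝ) := by
      exact_mod_cast Nat.choose_pos (by have := Finset.mem_range.mp hm; omega)
    have hTm : (0:ℝ) < T^m := pow_pos hT0 m
    have hTm' : (0:ℝ) < (1-T)^(M+2-m) := pow_pos h1T _
    rw [Real.log_mul (by positivity) (ne_of_gt hTm'), Real.log_mul (ne_of_gt hC) (ne_of_gt hTm),
      Real.log_pow, Real.log_pow]
    unfold cc
    ring
  rw [Finset.sum_congr rfl hlog, Finset.sum_add_distrib, Finset.sum_add_distrib,
    ← Finset.mul_sum, ← Finset.mul_sum]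
  have hm1 := binom_mean (M+1) T
  have hm2 := binom_mean' (M+1) T
  simp only [show M+1+2 = M+3 from rfl, show M+1+1 = M+2 from rfl] at hm1 hm2
  rw [hm1, hm2]
  simp only [Real.negMulLog]
  push_cast
  ring

lemma delta_bound (M k : ℕ) (hk : k ≤ M) :
    -((cc (M+2) (k+2) - cc (M+2) (k+1)) - (cc (M+2) (k+1) - cc (M+2) k))
      ≤ 1/((k:ℝ)+1) + 1/((M:ℝ)+1-(k:ℝ)) := by
  have hM1k : (0:ℝ) < (M:ℝ)+1-(k:ℝ) := by
    have : (k:ℝ) ≤ (M:ℝ) := by exact_mod_cast hk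
    linarith
  have hM2k : (0:ℝ) < (M:ℝ)+2-(k:ℝ) := by linarith
  have hcp : ∀ j, j ≤ M+2 → (0:ℝ) < ((M+2).choose j : ℝ) := fun j hj => by
    exact_mod_cast Nat.choose_pos hj
  have h1 : cc (M+2) (k+1) - cc (M+2) k = Real.log ((M:ℝ)+2-(k:ℝ)) - Real.log ((k:ℝ)+1) := by
    have hid := Nat.choose_succ_right_eq (M+2) k
    have hidR : ((M+2).choose (k+1) : ℝ) * ((k:ℝ)+1) = ((M+2).choose k : ℝ) * ((M:ℝ)+2-(k:ℝ)) := by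
      have h' : ((M+2-k:ℕ):ℝ) = (M:ℝ)+2-(k:ℝ) := by
        rw [Nat.cast_sub (by omega)]; push_cast; ring
      rw [← h']
      exact_mod_cast congrArg (Nat.cast (R := ℝ)) hid
    have := congrArg Real.log hidR
    rw [Real.log_mul (ne_of_gt (hcp (k+1) (by omega))) (by positivity),
      Real.log_mul (ne_of_gt (hcp k (by omega))) (ne_of_gt hM2k)] at this
    unfold cc
    linarith
  have h2 : cc (M+2) (k+2) - cc (M+2) (k+1) = Real.log ((M:ℝ)+1-(k:ℝ)) - Real.log ((k:ℝ)+2) := by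
    have hid := Nat.choose_succ_right_eq (M+2) (k+1)
    have hidR : ((M+2).choose (k+2) : ℝ) * ((k:ℝ)+2) = ((M+2).choose (k+1) : ℝ) * ((M:ℝ)+1-(k:ℝ)) := by
      have h' : ((M+2-(k+1):ℕ):ℝ) = (M:ℝ)+1-(k:ℝ) := by
        rw [Nat.cast_sub (by omega)]; push_cast; ring
      rw [← h']
      have := congrArg (Nat.cast (R := ℝ)) hid
      push_cast at this ⊢
      linarith
    have := congrArg Real.log hidR
    rw [Real.log_mul (ne_of_gt (hcp (k+2) (by omega))) (by positivity),
      Real.log_mul (ne_of_gt (hcp (k+1) (by omega))) (ne_of_gt hM1k)] at this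
    unfold cc
    linarith
  have b1 : Real.log ((k:ℝ)+2) - Real.log ((k:ℝ)+1) ≤ 1/((k:ℝ)+1) := by
    have hpos : (0:ℝ) < ((k:ℝ)+2)/((k:ℝ)+1) := by positivity
    have := Real.log_le_sub_one_of_pos hpos
    rw [Real.log_div (by positivity) (by positivity)] at this
    have he : ((k:ℝ)+2)/((k:ℝ)+1) - 1 = 1/((k:ℝ)+1) := by field_simp; norm_num
    linarith [he ▸ this]
  have b2 : Real.log ((M:ℝ)+2-(k:ℝ)) - Real.log ((M:ℝ)+1-(k:ℝ)) ≤ 1/((M:ℝ)+1-(k:ℝ)) := by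
    have hpos : (0:ℝ) < ((M:ℝ)+2-(k:ℝ))/((M:ℝ)+1-(k:ℝ)) := by positivity
    have := Real.log_le_sub_one_of_pos hpos
    rw [Real.log_div (ne_of_gt hM2k) (ne_of_gt hM1k)] at this
    have he : ((M:ℝ)+2-(k:ℝ))/((M:ℝ)+1-(k:ℝ)) - 1 = 1/((M:ℝ)+1-(k:ℝ)) := by
      field_simp; ring
    linarith [he ▸ this]
  rw [h1, h2]
  linarith

lemma boundA (M : ℕ) {T : ℝ} (hT0 : 0 < T) (hT1 : T < 1) :
    ((M:ℝ)+1) * ∑ k ∈ Finset.range (M+1),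
        (1/((k:ℝ)+1)) * (M.choose k : ℝ) * T^k * (1-T)^(M-k) ≤ 1/T := by
  have h1T : (0:ℝ) < 1 - T := by linarith
  have step : ((M:ℝ)+1) * ∑ k ∈ Finset.range (M+1),
        (1/((k:ℝ)+1)) * (M.choose k : ℝ) * T^k * (1-T)^(M-k)
      = (1/T) * ∑ k ∈ Finset.range (M+1),
        ((M+1).choose (k+1) : ℝ) * T^(k+1) * (1-T)^(M-k) := by
    rw [Finset.mul_sum, Finset.mul_sum]
    apply Finset.sum_congr rfl
    intro k hk
    have hcast : ((M:ℝ)+1) * (M.choose k : ℝ) = ((M+1).choose (k+1) : ℝ) * ((k:ℝ)+1) := by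
      exact_mod_cast congrArg (Nat.cast (R := ℝ)) (Nat.add_one_mul_choose_eq M k)
    have hk1 : ((k:ℝ)+1) ≠ 0 := by positivity
    have hT0' : T ≠ 0 := ne_of_gt hT0
    rw [pow_succ]
    field_simp
    linear_combination hcast
  rw [step]
  have hle : ∑ k ∈ Finset.range (M+1), ((M+1).choose (k+1):ℝ) * T^(k+1) * (1-T)^(M-k) ≤ 1 := by
    have htot := binom_sum_one (M+1) T
    rw [Finset.sum_range_succ'] at htot
    simp only [Nat.succ_sub_succ_eq_sub] at htot
    have hf0 : (0:ℝ) ≤ ((M+1).choose 0 : ℝ) * T^0 * (1-T)^(M+1-0) := by positivity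
    linarith
  calc (1/T) * ∑ k ∈ Finset.range (M+1), ((M+1).choose (k+1):ℝ) * T^(k+1) * (1-T)^(M-k)
      ≤ (1/T) * 1 := mul_le_mul_of_nonneg_left hle (by positivity)
    _ = 1/T := mul_one _

lemma boundB (M : ℕ) {T : ℝ} (hT0 : 0 < T) (hT1 : T < 1) :
    ((M:ℝ)+1) * ∑ k ∈ Finset.range (M+1),
        (1/((M:ℝ)+1-(k:ℝ))) * (M.choose k : ℝ) * T^k * (1-T)^(M-k) ≤ 1/(1-T) := by
  have h1T : (0:ℝ) < 1 - T := by linarith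
  have step : ((M:ℝ)+1) * ∑ k ∈ Finset.range (M+1),
        (1/((M:ℝ)+1-(k:ℝ))) * (M.choose k : ℝ) * T^k * (1-T)^(M-k)
      = (1/(1-T)) * ∑ k ∈ Finset.range (M+1),
        ((M+1).choose k : ℝ) * T^k * (1-T)^(M+1-k) := by
    rw [Finset.mul_sum, Finset.mul_sum]
    apply Finset.sum_congr rfl
    intro k hk
    have hk' : k ≤ M := by have := Finset.mem_range.mp hk; omega
    have hM1k : (0:ℝ) < (M:ℝ)+1-(k:ℝ) := by
      have : (k:ℝ) ≤ (M:ℝ) := by exact_mod_cast hk'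
      linarith
    have hcast : (M.choose k : ℝ) * ((M:ℝ)+1) = ((M+1).choose k : ℝ) * ((M:ℝ)+1-(k:ℝ)) := by
      have h' : ((M+1-k:ℕ):ℝ) = (M:ℝ)+1-(k:ℝ) := by
        rw [Nat.cast_sub (by omega)]; push_cast; ring
      rw [← h']
      exact_mod_cast congrArg (Nat.cast (R := ℝ)) (Nat.choose_mul_succ_eq M k)
    have he : M+1-k = (M-k)+1 := by omega
    rw [he, pow_succ]
    field_simp
    linear_combination hcast
  rw [step]
  have hle : ∑ k ∈ Finset.range (M+1), ((M+1).choose k:ℝ) * T^k * (1-T)^(M+1-k) ≤ 1 := by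
    have htot := binom_sum_one (M+1) T
    simp only [show M+1+1 = M+2 from rfl] at htot
    have hsub := Finset.sum_le_sum_of_subset_of_nonneg
      (Finset.range_subset_range.mpr (by omega : M+1 ≤ M+2))
      (fun i _ _ => by positivity :
        ∀ i ∈ Finset.range (M+2), i ∉ Finset.range (M+1) →
          (0:ℝ) ≤ ((M+1).choose i : ℝ) * T^i * (1-T)^(M+1-i))
    linarith
  calc (1/(1-T)) * ∑ k ∈ Finset.range (M+1), ((M+1).choose k:ℝ) * T^k * (1-T)^(M+1-k)
      ≤ (1/(1-T)) * 1 := mul_le_mul_of_nonneg_left hle (by positivity)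
    _ = 1/(1-T) := mul_one _



lemma concaveG (M : ℕ) :
    ConcaveOn ℝ (Set.Ioo (0:ℝ) 1) (fun t =>
      ((M:ℝ)+2) * (Real.negMulLog t + Real.negMulLog (1-t))
      - ∑ m ∈ Finset.range (M+3),
          cc (M+2) m * ((M+2).choose m : ℝ) * t^m * (1-t)^(M+2-m)) := by
  set f1 : ℝ → ℝ := fun t => ((M:ℝ)+2) * (Real.log (1-t) - Real.log t)
      - ((M:ℝ)+2) * ∑ k ∈ Finset.range (M+2),
          (cc (M+2) (k+1) - cc (M+2) k) * ((M+1).choose k : ℝ) * t^k * (1-t)^(M+1-k)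
    with hf1
  set f2 : ℝ → ℝ := fun t => ((M:ℝ)+2) * (-(1-t)⁻¹ - t⁻¹)
      - ((M:ℝ)+2) * (((M:ℝ)+1) * ∑ k ∈ Finset.range (M+1),
          ((cc (M+2) (k+2) - cc (M+2) (k+1)) - (cc (M+2) (k+1) - cc (M+2) k))
            * (M.choose k : ℝ) * t^k * (1-t)^(M-k))
    with hf2
  apply concaveOn_of_hasDerivWithinAt2_nonpos (f' := f1) (f'' := f2) (convex_Ioo 0 1)
  · -- continuity
    apply Continuous.continuousOn
    apply Continuous.sub
    · exact continuous_const.mul (Real.continuous_negMulLog.add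
        (Real.continuous_negMulLog.comp (continuous_const.sub continuous_id)))
    · exact continuous_finset_sum _ fun m _ =>
        ((continuous_const.mul (continuous_pow m)).mul
          ((continuous_const.sub continuous_id).pow _))
  · -- first derivative
    intro x hx
    rw [interior_Ioo] at hx ⊢
    obtain ⟨hx0, hx1⟩ := hx
    have h1x : (0:ℝ) < 1 - x := by linarith
    have hneg1 : HasDerivAt Real.negMulLog (-Real.log x - 1) x :=
      Real.hasDerivAt_negMulLog (ne_of_gt hx0)
    have hneg2 : HasDerivAt (fun t:ℝ => Real.negMulLog (1-t)) (Real.log (1-x) + 1) x := by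
      have h := (Real.hasDerivAt_negMulLog (ne_of_gt h1x)).comp x
        ((hasDerivAt_id x).const_sub 1)
      refine h.congr_deriv ?_
      ring
    have hsum := hasDerivAt_binsum (M+1) (cc (M+2)) x
    simp only [show M+1+2 = M+3 from rfl, show M+1+1 = M+2 from rfl] at hsum
    have hG := ((hneg1.add hneg2).const_mul ((M:ℝ)+2)).sub hsum
    refine HasDerivAt.hasDerivWithinAt ?_
    refine hG.congr_deriv ?_
    rw [hf1]
    push_cast
    ring
  · -- second derivative
    intro x hx
    rw [interior_Ioo] at hx ⊢
    obtain ⟨hx0, hx1⟩ := hx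
    have h1x : (0:ℝ) < 1 - x := by linarith
    have hlog1 : HasDerivAt (fun t:ℝ => Real.log (1-t) - Real.log t) (-(1-x)⁻¹ - x⁻¹) x := by
      have l1 := (Real.hasDerivAt_log (ne_of_gt h1x)).comp x ((hasDerivAt_id x).const_sub 1)
      have l2 := Real.hasDerivAt_log (ne_of_gt hx0)
      refine (l1.sub l2).congr_deriv ?_
      ring
    have hsum2 := (hasDerivAt_binsum M (fun k => cc (M+2) (k+1) - cc (M+2) k) x).const_mul
      ((M:ℝ)+2)
    have hF := (hlog1.const_mul ((M:ℝ)+2)).sub hsum2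
    refine HasDerivAt.hasDerivWithinAt ?_
    exact hF
  · -- f2 nonpos
    intro x hx
    rw [interior_Ioo] at hx
    obtain ⟨hx0, hx1⟩ := hx
    have h1x : (0:ℝ) < 1 - x := by linarith
    rw [hf2]
    set Sig2 := ∑ k ∈ Finset.range (M+1),
        ((cc (M+2) (k+2) - cc (M+2) (k+1)) - (cc (M+2) (k+1) - cc (M+2) k))
          * (M.choose k : ℝ) * x^k * (1-x)^(M-k) with hSig2
    have key : ∀ k ∈ Finset.range (M+1),
        -(((cc (M+2) (k+2) - cc (M+2) (k+1)) - (cc (M+2) (k+1) - cc (M+2) k))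
            * (M.choose k : ℝ) * x^k * (1-x)^(M-k))
          ≤ (1/((k:ℝ)+1)) * (M.choose k : ℝ) * x^k * (1-x)^(M-k)
            + (1/((M:ℝ)+1-(k:ℝ))) * (M.choose k : ℝ) * x^k * (1-x)^(M-k) := by
      intro k hk
      have hk' : k ≤ M := by have := Finset.mem_range.mp hk; omega
      have hb := delta_bound M k hk'
      have hw : (0:ℝ) ≤ (M.choose k : ℝ) * x^k * (1-x)^(M-k) := by positivity
      have hmul := mul_le_mul_of_nonneg_right hb hw
      calc -(((cc (M+2) (k+2) - cc (M+2) (k+1)) - (cc (M+2) (k+1) - cc (M+2) k))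
            * (M.choose k : ℝ) * x^k * (1-x)^(M-k))
          = -((cc (M+2) (k+2) - cc (M+2) (k+1)) - (cc (M+2) (k+1) - cc (M+2) k))
            * ((M.choose k : ℝ) * x^k * (1-x)^(M-k)) := by ring
        _ ≤ (1/((k:ℝ)+1) + 1/((M:ℝ)+1-(k:ℝ))) * ((M.choose k : ℝ) * x^k * (1-x)^(M-k)) := hmul
        _ = (1/((k:ℝ)+1)) * (M.choose k : ℝ) * x^k * (1-x)^(M-k)
            + (1/((M:ℝ)+1-(k:ℝ))) * (M.choose k : ℝ) * x^k * (1-x)^(M-k) := by ring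
    have hsumle : -Sig2 ≤ ∑ k ∈ Finset.range (M+1),
        ((1/((k:ℝ)+1)) * (M.choose k : ℝ) * x^k * (1-x)^(M-k)
          + (1/((M:ℝ)+1-(k:ℝ))) * (M.choose k : ℝ) * x^k * (1-x)^(M-k)) := by
      rw [hSig2, ← Finset.sum_neg_distrib]
      exact Finset.sum_le_sum key
    rw [Finset.sum_add_distrib] at hsumle
    have hA := boundA M hx0 hx1
    have hB := boundB M hx0 hx1
    have hM1 : (0:ℝ) ≤ (M:ℝ)+1 := by positivity
    have hM2 : (0:ℝ) ≤ (M:ℝ)+2 := by positivity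
    have hstep : ((M:ℝ)+1) * (-Sig2) ≤ 1/x + 1/(1-x) := by
      calc ((M:ℝ)+1) * (-Sig2)
          ≤ ((M:ℝ)+1) * (∑ k ∈ Finset.range (M+1),
              (1/((k:ℝ)+1)) * (M.choose k : ℝ) * x^k * (1-x)^(M-k)
            + ∑ k ∈ Finset.range (M+1),
              (1/((M:ℝ)+1-(k:ℝ))) * (M.choose k : ℝ) * x^k * (1-x)^(M-k)) :=
            mul_le_mul_of_nonneg_left hsumle hM1
        _ = ((M:ℝ)+1) * ∑ k ∈ Finset.range (M+1),
              (1/((k:ℝ)+1)) * (M.choose k : ℝ) * x^k * (1-x)^(M-k)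
            + ((M:ℝ)+1) * ∑ k ∈ Finset.range (M+1),
              (1/((M:ℝ)+1-(k:ℝ))) * (M.choose k : ℝ) * x^k * (1-x)^(M-k) := by ring
        _ ≤ 1/x + 1/(1-x) := add_le_add hA hB
    have hx' : 1/x = x⁻¹ := one_div x
    have h1x' : 1/(1-x) = (1-x)⁻¹ := one_div _
    rw [hx', h1x'] at hstep
    nlinarith [hstep, hM2]


/-- Shepp–Olkin special case: the Shannon entropy of the binomial distribution
`S_n(T) = -∑_{m=0}^n C(n,m) T^m (1-T)^(n-m) log(C(n,m) T^m (1-T)^(n-m))`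
is symmetric about `T = 1/2`, concave on `(0,1)`, hence maximized at `T = 1/2`. -/
theorem binomial_entropy_concave (n : ℕ)
    (S : ℝ → ℝ)
    (hS : ∀ T : ℝ, S T = -∑ m ∈ Finset.range (n + 1),
      ((Nat.choose n m : ℝ) * T ^ m * (1 - T) ^ (n - m)) *
        Real.log ((Nat.choose n m : ℝ) * T ^ m * (1 - T) ^ (n - m))) :
    (∀ T ∈ Ioo (0:ℝ) 1, S T = S (1 - T)) ∧
      ConcaveOn ℝ (Ioo (0:ℝ) 1) S ∧
      (∀ T ∈ Ioo (0:ℝ) 1, S T ≤ S (1 / 2)) := by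
  have hsymm : ∀ T : ℝ, S T = S (1 - T) := by
    intro T
    rw [hS T, hS (1-T)]
    simp only [sub_sub_cancel]
    rw [neg_inj]
    conv_rhs => rw [← Finset.sum_range_reflect]
    simp only [Nat.add_sub_cancel]
    apply Finset.sum_congr rfl
    intro j hj
    have hj' : j ≤ n := by have := Finset.mem_range.mp hj; omega
    rw [Nat.choose_symm hj', Nat.sub_sub_self hj']
    have harg : ((n.choose j : ℝ)) * (1-T)^(n-j) * T^j = (n.choose j : ℝ) * T^j * (1-T)^(n-j) := by
      ring
    rw [harg]
  have hconc : ConcaveOn ℝ (Ioo (0:ℝ) 1) S := by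
    rcases Nat.lt_or_ge n 2 with hn | hn
    · interval_cases n
      · have hS0 : ∀ T : ℝ, S T = 0 := by
          intro T
          rw [hS]
          norm_num
        exact concaveOn_congr_of_eq (concaveOn_const 0 (convex_Ioo 0 1)) fun x _ => hS0 x
      · have hS1 : ∀ T : ℝ, S T = Real.negMulLog T + Real.negMulLog (1-T) := by
          intro T
          rw [hS]
          simp [Finset.sum_range_succ, Real.negMulLog]
          ring
        have h1 : ConcaveOn ℝ (Ioo (0:ℝ) 1) Real.negMulLog :=
          Real.concaveOn_negMulLog.subset (fun x hx => le_of_lt hx.1) (convex_Ioo 0 1)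
        have h2 : ConcaveOn ℝ (Ioo (0:ℝ) 1) (fun t => Real.negMulLog (1-t)) := by
          refine ⟨convex_Ioo 0 1, fun x hx y hy a b ha hb hab => ?_⟩
          have hx' : (1:ℝ) - x ∈ Ici (0:ℝ) := by
            simp only [Set.mem_Ici]; linarith [hx.2]
          have hy' : (1:ℝ) - y ∈ Ici (0:ℝ) := by
            simp only [Set.mem_Ici]; linarith [hy.2]
          have h := Real.concaveOn_negMulLog.2 hx' hy' ha hb hab
          simp only [smul_eq_mul] at h ⊢
          have he : a * (1-x) + b * (1-y) = 1 - (a*x + b*y) := by linear_combination hab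
          rw [he] at h
          exact h
        exact concaveOn_congr_of_eq (h1.add h2) fun x _ => hS1 x
    · obtain ⟨M, rfl⟩ : ∃ M, n = M + 2 := ⟨n - 2, by omega⟩
      apply concaveOn_congr_of_eq (concaveG M)
      intro x hx
      rw [hS x]
      exact S_eq M hx.1 hx.2
  refine ⟨fun T _ => hsymm T, hconc, fun T hT => ?_⟩
  have hT' : 1 - T ∈ Ioo (0:ℝ) 1 := ⟨by linarith [hT.2], by linarith [hT.1]⟩
  have h := hconc.2 hT hT' (show (0:ℝ) ≤ 1/2 by norm_num) (show (0:ℝ) ≤ 1/2 by norm_num)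
    (show (1:ℝ)/2 + 1/2 = 1 by norm_num)
  simp only [smul_eq_mul] at h
  have he : (1/2 : ℝ) * T + (1/2 : ℝ) * (1-T) = 1/2 := by ring
  rw [he] at h
  linarith [hsymm T, h]
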